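/- arXiv:2603.15219 — 3 statements merged into one kernel-verified Lean document; each statement's English description precedes it below -/
import Mathlib

section
/- Let X_k ∈ R^{n×d} stack the D-POEM iterates x_{i,k} as rows, J = (1/n)11ᵀ, X̃_k := (I−J)X_k, and σ := ‖W−J‖₂ < 1. Assume all agents share a common initialization x_{1,0} = ⋯ = x_{n,0}, the feasible set X has diameter D_X, and the algorithm performs X_{k+1} = Π_X^{row}(W X_k − S_k G_k) with S_k = diag(η_{1,k},…,η_{n,k}), η_{i,k} = r̄_{i,k}/√(G_{i,k}), r̄_{i,k} ≤ D_X, and G_{i,k} = G_{i,k−1} + ‖g_{i,k}‖². Then for any horizon K ≥ 1, (1/K) Σ_{k=0}^{K−1} ‖X̃_k‖_F ≤ (D_X/(1−σ)) √( (1/K) Σ_{i=1}^n log(G_{i,K−1}/G_{i,0}) ). -/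
open Finset
variable {E : Type*} [NormedAddCommGroup E] [InnerProductSpace ℝ E]

lemma aux_var_id {n : ℕ} (y : Fin n → E) :
    ∑ i, ‖y i - (1/(n:ℝ)) • ∑ j, y j‖^2
      = ∑ i, ‖y i‖^2 - (2/(n:ℝ)) * ‖∑ j, y j‖^2 + (n:ℝ) * ((1/(n:ℝ))^2 * ‖∑ j, y j‖^2) := by
  have h : ∀ i : Fin n, ‖y i - (1/(n:ℝ)) • ∑ j, y j‖^2
      = ‖y i‖^2 - 2 * ((1/(n:ℝ)) * inner ℝ (y i) (∑ j, y j)) + (1/(n:ℝ))^2 * ‖∑ j, y j‖^2 := by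
    intro i
    rw [norm_sub_sq_real, real_inner_smul_right, norm_smul]
    have : ‖(1/(n:ℝ))‖ = 1/(n:ℝ) := by
      rw [Real.norm_eq_abs, abs_of_nonneg]; positivity
    rw [this]; ring
  rw [Finset.sum_congr rfl (fun i _ => h i)]
  rw [Finset.sum_add_distrib, Finset.sum_sub_distrib, Finset.sum_const]
  simp only [← Finset.mul_sum, ← sum_inner, real_inner_self_eq_norm_sq]
  simp only [card_univ, Fintype.card_fin, nsmul_eq_mul]
  ring

lemma aux_var_eq {n : ℕ} (hn : 0 < n) (y : Fin n → E) :
    ∑ i, ‖y i - (1/(n:ℝ)) • ∑ j, y j‖^2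
      = ∑ i, ‖y i‖^2 - (1/(n:ℝ)) * ‖∑ j, y j‖^2 := by
  have h0 : ((n:ℝ)) ≠ 0 := Nat.cast_ne_zero.mpr hn.ne'
  rw [aux_var_id]; field_simp; ring

lemma aux_var_le {n : ℕ} (hn : 0 < n) (y : Fin n → E) :
    ∑ i, ‖y i - (1/(n:ℝ)) • ∑ j, y j‖^2 ≤ ∑ i, ‖y i‖^2 := by
  rw [aux_var_eq hn]
  have : 0 ≤ (1/(n:ℝ)) * ‖∑ j, y j‖^2 := by positivity
  linarith

lemma aux_pair {n : ℕ} (hn : 0 < n) (y : Fin n → E) :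
    ∑ i, ‖y i - (1/(n:ℝ)) • ∑ j, y j‖^2
      = (1/(2*(n:ℝ))) * ∑ i, ∑ j, ‖y i - y j‖^2 := by
  have h0 : ((n:ℝ)) ≠ 0 := Nat.cast_ne_zero.mpr hn.ne'
  have h1 : ∑ i, ∑ j, ‖y i - y j‖^2
      = 2*(n:ℝ)*∑ i, ‖y i‖^2 - 2*‖∑ j, y j‖^2 := by
    have hexp : ∀ i j : Fin n, ‖y i - y j‖^2
        = ‖y i‖^2 - 2 * inner ℝ (y i) (y j) + ‖y j‖^2 := fun i j => norm_sub_sq_real _ _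
    simp only [hexp, Finset.sum_add_distrib, Finset.sum_sub_distrib, Finset.sum_const,
      card_univ, Fintype.card_fin, nsmul_eq_mul, ← Finset.mul_sum, ← inner_sum, ← sum_inner,
      real_inner_self_eq_norm_sq]
    ring
  rw [aux_var_eq hn, h1]; field_simp

lemma aux_contr {n : ℕ} (hn : 0 < n) (p u : Fin n → E)
    (h : ∀ i j, ‖p i - p j‖ ≤ ‖u i - u j‖) :
    ∑ i, ‖p i - (1/(n:ℝ)) • ∑ j, p j‖^2 ≤ ∑ i, ‖u i - (1/(n:ℝ)) • ∑ j, u j‖^2 := by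
  rw [aux_pair hn, aux_pair hn]
  have hc : 0 ≤ 1/(2*(n:ℝ)) := by positivity
  refine mul_le_mul_of_nonneg_left (Finset.sum_le_sum fun i _ => Finset.sum_le_sum fun j _ => ?_) hc
  exact pow_le_pow_left₀ (norm_nonneg _) (h i j) 2

lemma aux_proj_nonexp {X : Set E} (hconv : Convex ℝ X) (hne : X.Nonempty)
    (proj : E → E) (hmem : ∀ a, proj a ∈ X)
    (hdist : ∀ a, ∀ y ∈ X, dist a (proj a) ≤ dist a y)
    (a b : E) : ‖proj a - proj b‖ ≤ ‖a - b‖ := by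
  haveI : Nonempty X := hne.to_subtype
  have hvar : ∀ c : E, ∀ w ∈ X, (inner ℝ (c - proj c) (w - proj c) : ℝ) ≤ 0 := by
    intro c w hw
    have hinf : ‖c - proj c‖ = ⨅ w : X, ‖c - w‖ := by
      apply le_antisymm
      · exact le_ciInf fun w => by
          simpa [dist_eq_norm] using hdist c w w.2
      · exact ciInf_le ⟨0, by rintro _ ⟨w, rfl⟩; positivity⟩ (⟨proj c, hmem c⟩ : X)
    exact (norm_eq_iInf_iff_real_inner_le_zero hconv (hmem c)).mp hinf w hw
  have h1 := hvar a (proj b) (hmem b)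
  have h2 := hvar b (proj a) (hmem a)
  have key : ‖proj a - proj b‖^2 ≤ inner ℝ (a - b) (proj a - proj b) := by
    have e : (inner ℝ (a - b) (proj a - proj b) : ℝ)
        = -(inner ℝ (a - proj a) (proj b - proj a) : ℝ)
          - (inner ℝ (b - proj b) (proj a - proj b) : ℝ)
          + ‖proj a - proj b‖^2 := by
      rw [← real_inner_self_eq_norm_sq]
      simp only [inner_sub_left, inner_sub_right]
      ring
    rw [e]; linarith
  have h3 : (inner ℝ (a - b) (proj a - proj b) : ℝ) ≤ ‖a - b‖ * ‖proj a - proj b‖ :=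
    real_inner_le_norm _ _
  by_cases hz : ‖proj a - proj b‖ = 0
  · rw [hz]; exact norm_nonneg _
  · have hpos : 0 < ‖proj a - proj b‖ := lt_of_le_of_ne (norm_nonneg _) (Ne.symm hz)
    nlinarith

lemma piLp_sum_apply {ι κ : Type*} [Fintype κ] (p : ENNReal) (α : ι → Type*)
    [∀ i, AddCommGroup (α i)] (f : κ → PiLp p α) (i : ι) :
    (∑ k, f k) i = ∑ k, f k i :=
  by rw [WithLp.ofLp_sum]; exact Finset.sum_apply i Finset.univ _

lemma aux_F_triangle {n : ℕ} {E : Type*} [NormedAddCommGroup E] (Y Z : Fin n → E) :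
    Real.sqrt (∑ i, ‖Y i + Z i‖^2) ≤ Real.sqrt (∑ i, ‖Y i‖^2) + Real.sqrt (∑ i, ‖Z i‖^2) := by
  have h := norm_add_le ((WithLp.equiv 2 (∀ _ : Fin n, E)).symm Y)
    ((WithLp.equiv 2 (∀ _ : Fin n, E)).symm Z)
  rw [PiLp.norm_eq_of_L2, PiLp.norm_eq_of_L2, PiLp.norm_eq_of_L2] at h
  simpa [PiLp.add_apply, WithLp.equiv_symm_apply, PiLp.toLp_apply] using h

lemma aux_norm_sq_eucl {m : ℕ} (w : EuclideanSpace ℝ (Fin m)) : ‖w‖^2 = ∑ c, (w c)^2 := by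
  rw [EuclideanSpace.norm_eq, Real.sq_sqrt (by positivity)]
  simp [Real.norm_eq_abs, sq_abs]

lemma aux_spec {n d : ℕ} (M : Matrix (Fin n) (Fin n) ℝ)
    (Y : Fin n → EuclideanSpace ℝ (Fin d)) :
    ∑ i, ‖∑ j, M i j • Y j‖^2
      ≤ ‖(Matrix.toEuclideanCLM (𝕜 := ℝ) M :
          EuclideanSpace ℝ (Fin n) →L[ℝ] EuclideanSpace ℝ (Fin n))‖^2 * ∑ j, ‖Y j‖^2 := by
  set T := (Matrix.toEuclideanCLM (𝕜 := ℝ) M :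
    EuclideanSpace ℝ (Fin n) →L[ℝ] EuclideanSpace ℝ (Fin n)) with hT
  set v : Fin d → EuclideanSpace ℝ (Fin n) :=
    fun c => (WithLp.equiv 2 (Fin n → ℝ)).symm (fun j => Y j c) with hv
  have happ : ∀ (i : Fin n) (c : Fin d), (∑ j, M i j • Y j) c = ∑ j, M i j * Y j c := by
    intro i c
    rw [piLp_sum_apply]
    simp [PiLp.smul_apply, smul_eq_mul]
  have hcol : ∀ c, T (v c) = (WithLp.equiv 2 (Fin n → ℝ)).symm
      (fun i => ∑ j, M i j * Y j c) := by
    intro c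
    simp only [hT, hv, WithLp.equiv_symm_apply]
    rw [Matrix.toEuclideanCLM_toLp]
    congr 1
  have hvnorm : ∀ c, ‖v c‖^2 = ∑ j, (Y j c)^2 := by
    intro c
    rw [aux_norm_sq_eucl]
    simp [hv, WithLp.equiv_symm_apply, PiLp.toLp_apply]
  calc ∑ i, ‖∑ j, M i j • Y j‖^2
      = ∑ i, ∑ c, (∑ j, M i j * Y j c)^2 := by
        refine Finset.sum_congr rfl fun i _ => ?_
        rw [aux_norm_sq_eucl]
        exact Finset.sum_congr rfl fun c _ => by rw [happ]
    _ = ∑ c, ∑ i, (∑ j, M i j * Y j c)^2 := Finset.sum_comm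
    _ = ∑ c, ‖T (v c)‖^2 := by
        refine Finset.sum_congr rfl fun c _ => ?_
        rw [hcol, aux_norm_sq_eucl]
        simp [WithLp.equiv_symm_apply, PiLp.toLp_apply]
    _ ≤ ∑ c, (‖T‖ * ‖v c‖)^2 := by
        refine Finset.sum_le_sum fun c _ => ?_
        exact pow_le_pow_left₀ (norm_nonneg _) (T.le_opNorm (v c)) 2
    _ = ‖T‖^2 * ∑ c, ∑ j, (Y j c)^2 := by
        rw [Finset.mul_sum]
        exact Finset.sum_congr rfl fun c _ => by rw [mul_pow, hvnorm]
    _ = ‖T‖^2 * ∑ j, ‖Y j‖^2 := by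
        rw [Finset.sum_comm]
        congr 1
        exact Finset.sum_congr rfl fun j _ => (aux_norm_sq_eucl (Y j)).symm

/-- Lemma 4, time-averaged consensus error.
Index convention: `G i 0` is the (positive) initial accumulator value and
`G i (k+1) = G i k + ‖g_{i,k}‖²` plays the role of `G_{i,k}`, so `G i K = G_{i,K−1}` and the
ratio `G_{i,K−1}/G_{i,0}` is `G i K / G i 0`.  `σ = ‖W − J‖₂` is the spectral norm of `W − J`,
`X̃_k = (I−J)X_k` has rows `x_{i,k} − x̄_k`, and
`(1/K) Σ_{k<K} ‖X̃_k‖_F ≤ (D_X/(1−σ)) √((1/K) Σ_i log(G_{i,K−1}/G_{i,0}))`. -/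
theorem stmt_3
    (d n K : ℕ) (hn : 0 < n) (hK : 1 ≤ K)
    (X : Set (EuclideanSpace ℝ (Fin d)))
    (hXconv : Convex ℝ X) (hXcomp : IsCompact X) (hXne : X.Nonempty)
    (DX : ℝ) (hDX : DX = Metric.diam X)
    (proj : EuclideanSpace ℝ (Fin d) → EuclideanSpace ℝ (Fin d))
    (hproj_mem : ∀ a, proj a ∈ X)
    (hproj_dist : ∀ a, ∀ y ∈ X, dist a (proj a) ≤ dist a y)
    (W : Matrix (Fin n) (Fin n) ℝ)
    (hWsymm : W.IsSymm)
    (hWnonneg : ∀ i j, 0 ≤ W i j)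
    (hWrow : ∀ i, ∑ j, W i j = 1)
    (hWcol : ∀ j, ∑ i, W i j = 1)
    (σ : ℝ)
    (hσdef : σ = ‖(Matrix.toEuclideanCLM (𝕜 := ℝ) (W - Matrix.of fun _ _ => (1 : ℝ) / n) :
      EuclideanSpace ℝ (Fin n) →L[ℝ] EuclideanSpace ℝ (Fin n))‖)
    (hσ : σ < 1)
    (x g : Fin n → ℕ → EuclideanSpace ℝ (Fin d))
    (hx_common : ∀ i j, x i 0 = x j 0)
    (hx0X : ∀ i, x i 0 ∈ X)
    (rb : Fin n → ℕ → ℝ)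
    (hrb_nonneg : ∀ i k, 0 ≤ rb i k)
    (hrbD : ∀ i k, rb i k ≤ DX)
    (G : Fin n → ℕ → ℝ)
    (hG0 : ∀ i, 0 < G i 0)
    (hGrec : ∀ i k, G i (k + 1) = G i k + ‖g i k‖ ^ 2)
    (η : Fin n → ℕ → ℝ)
    (hη : ∀ i k, η i k = rb i k / Real.sqrt (G i (k + 1)))
    (hupdate : ∀ i k, x i (k + 1) = proj ((∑ j, W i j • x j k) - η i k • g i k))
    (xbar : ℕ → EuclideanSpace ℝ (Fin d))
    (hxbar : ∀ k, xbar k = (1 / (n : ℝ)) • ∑ i, x i k) :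
    (1 / K) * ∑ k ∈ range K, Real.sqrt (∑ i, ‖x i k - xbar k‖ ^ 2)
      ≤ (DX / (1 - σ)) * Real.sqrt ((1 / K) * ∑ i, Real.log (G i K / G i 0)) := by

  -- basic facts
  have hn0 : ((n:ℝ)) ≠ 0 := Nat.cast_ne_zero.mpr hn.ne'
  have hKpos : (0:ℝ) < K := by exact_mod_cast hK
  have hσ0 : 0 ≤ σ := hσdef ▸ norm_nonneg _
  have hDX0 : 0 ≤ DX := hDX ▸ Metric.diam_nonneg
  have h1σ : 0 < 1 - σ := by linarith
  have hGpos : ∀ i k, 0 < G i k := by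
    intro i k
    induction k with
    | zero => exact hG0 i
    | succ m ih => rw [hGrec]; nlinarith [sq_nonneg ‖g i m‖]
  set C : ℕ → ℝ := fun k => Real.sqrt (∑ i, ‖x i k - xbar k‖^2) with hCdef
  set a : ℕ → ℝ := fun k => Real.sqrt (∑ i, ‖η i k • g i k‖^2) with hadef
  have hC0 : C 0 = 0 := by
    have hx0 : ∀ i : Fin n, x i 0 - xbar 0 = 0 := by
      intro i
      rw [hxbar]
      have hsum : ∑ j, x j 0 = (n:ℝ) • x i 0 := by
        rw [Finset.sum_congr rfl fun j _ => hx_common j i]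
        rw [Finset.sum_const, card_univ, Fintype.card_fin, ← Nat.cast_smul_eq_nsmul ℝ]
      rw [hsum, smul_smul, one_div, inv_mul_cancel₀ hn0, one_smul, sub_self]
    simp only [hCdef, hx0, norm_zero]
    simp
  have hCnonneg : ∀ k, 0 ≤ C k := fun k => Real.sqrt_nonneg _
  have hrec : ∀ k, C (k+1) ≤ σ * C k + a k := by
    intro k
    set u : Fin n → EuclideanSpace ℝ (Fin d) :=
      fun i => (∑ j, W i j • x j k) - η i k • g i k with hu
    set z : Fin n → EuclideanSpace ℝ (Fin d) :=
      fun i => ∑ j, (W i j - 1/(n:ℝ)) • (x j k - xbar k) with hz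
    set w : Fin n → EuclideanSpace ℝ (Fin d) :=
      fun i => (1/(n:ℝ)) • (∑ j, η j k • g j k) - η i k • g i k with hw
    have hzero : ∑ j, (x j k - xbar k) = 0 := by
      rw [Finset.sum_sub_distrib, Finset.sum_const, card_univ, Fintype.card_fin,
        ← Nat.cast_smul_eq_nsmul ℝ, hxbar, smul_smul]
      rw [show (n:ℝ) * (1/(n:ℝ)) = 1 by field_simp, one_smul, sub_self]
    have hz_eq : ∀ i, z i = (∑ j, W i j • x j k) - xbar k := by
      intro i
      have hterm : ∀ j, (W i j - 1/(n:ℝ)) • (x j k - xbar k)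
          = W i j • x j k - W i j • xbar k - (1/(n:ℝ)) • (x j k - xbar k) := by
        intro j; rw [sub_smul, smul_sub]
      rw [show z i = ∑ j, (W i j - 1/(n:ℝ)) • (x j k - xbar k) from rfl,
        Finset.sum_congr rfl fun j _ => hterm j, Finset.sum_sub_distrib,
        Finset.sum_sub_distrib, ← Finset.smul_sum, hzero, smul_zero, ← Finset.sum_smul,
        hWrow i, one_smul, sub_zero]
    have hsumA : ∑ j, ∑ l, W j l • x l k = ∑ l : Fin n, x l k := by
      rw [Finset.sum_comm]
      refine Finset.sum_congr rfl fun l _ => ?_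
      rw [← Finset.sum_smul, hWcol l, one_smul]
    have hdecomp : ∀ i, u i - (1/(n:ℝ)) • ∑ j, u j = z i + w i := by
      intro i
      have hsumu : ∑ j, u j = (∑ l : Fin n, x l k) - ∑ j, η j k • g j k := by
        rw [show (∑ j, u j) = ∑ j, ((∑ l, W j l • x l k) - η j k • g j k) from rfl,
          Finset.sum_sub_distrib, hsumA]
      rw [show u i = (∑ j, W i j • x j k) - η i k • g i k from rfl, hsumu, hz_eq i,
        show w i = (1/(n:ℝ)) • (∑ j, η j k • g j k) - η i k • g i k from rfl,
        smul_sub, ← hxbar k]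
      abel
    have hpair : ∀ i j, ‖x i (k+1) - x j (k+1)‖ ≤ ‖u i - u j‖ := by
      intro i j
      rw [hupdate i k, hupdate j k]
      exact aux_proj_nonexp hXconv hXne proj hproj_mem hproj_dist _ _
    have h1 : ∑ i, ‖x i (k+1) - xbar (k+1)‖^2 ≤ ∑ i, ‖z i + w i‖^2 := by
      rw [hxbar (k+1)]
      calc ∑ i, ‖x i (k+1) - (1/(n:ℝ)) • ∑ j, x j (k+1)‖^2
          ≤ ∑ i, ‖u i - (1/(n:ℝ)) • ∑ j, u j‖^2 :=
            aux_contr hn (fun i => x i (k+1)) u hpair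
        _ = ∑ i, ‖z i + w i‖^2 := Finset.sum_congr rfl fun i _ => by rw [hdecomp i]
    have hzb : Real.sqrt (∑ i, ‖z i‖^2) ≤ σ * C k := by
      have h := aux_spec (W - Matrix.of fun _ _ => (1:ℝ)/n) (fun j => x j k - xbar k)
      have h2 : ∑ i, ‖z i‖^2 ≤ σ^2 * ∑ j, ‖x j k - xbar k‖^2 := by
        rw [hσdef]
        exact h
      calc Real.sqrt (∑ i, ‖z i‖^2)
          ≤ Real.sqrt (σ^2 * ∑ j, ‖x j k - xbar k‖^2) := Real.sqrt_le_sqrt h2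
        _ = σ * C k := by rw [Real.sqrt_mul (sq_nonneg σ), Real.sqrt_sq hσ0]
    have hwb : Real.sqrt (∑ i, ‖w i‖^2) ≤ a k := by
      have hwn : ∀ i, ‖w i‖ = ‖η i k • g i k - (1/(n:ℝ)) • ∑ j, η j k • g j k‖ := by
        intro i
        rw [show w i = (1/(n:ℝ)) • (∑ j, η j k • g j k) - η i k • g i k from rfl,
          ← norm_neg]
        congr 1
        abel
      have h3 : ∑ i, ‖w i‖^2 ≤ ∑ i, ‖η i k • g i k‖^2 := by
        calc ∑ i, ‖w i‖^2
            = ∑ i, ‖η i k • g i k - (1/(n:ℝ)) • ∑ j, η j k • g j k‖^2 :=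
              Finset.sum_congr rfl fun i _ => by rw [hwn i]
          _ ≤ ∑ i, ‖η i k • g i k‖^2 := aux_var_le hn _
      exact Real.sqrt_le_sqrt h3
    calc C (k+1) ≤ Real.sqrt (∑ i, ‖z i + w i‖^2) := Real.sqrt_le_sqrt h1
      _ ≤ Real.sqrt (∑ i, ‖z i‖^2) + Real.sqrt (∑ i, ‖w i‖^2) := aux_F_triangle z w
      _ ≤ σ * C k + a k := add_le_add hzb hwb
  -- summing the recursion
  have hsumC : (1-σ) * ∑ k ∈ range K, C k ≤ ∑ k ∈ range K, a k := by
    have h := Finset.sum_le_sum (fun k (_ : k ∈ range K) => hrec k)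
    rw [Finset.sum_add_distrib, ← Finset.mul_sum] at h
    have e1 := Finset.sum_range_succ' C K
    have e2 := Finset.sum_range_succ C K
    have hCK := hCnonneg K
    linarith
  -- stepsize bound
  set b : ℕ → ℝ := fun k => ∑ i, ‖g i k‖^2 / G i (k+1) with hbdef
  have hb0 : ∀ k, 0 ≤ b k := fun k => Finset.sum_nonneg fun i _ => div_nonneg (by positivity) (hGpos i (k+1)).le
  have hab : ∀ k, a k ≤ DX * Real.sqrt (b k) := by
    intro k
    have h4 : ∑ i, ‖η i k • g i k‖^2 ≤ DX^2 * b k := by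
      rw [show b k = ∑ i, ‖g i k‖^2 / G i (k+1) from rfl, Finset.mul_sum]
      refine Finset.sum_le_sum fun i _ => ?_
      rw [norm_smul, mul_pow, Real.norm_eq_abs, sq_abs, hη, div_pow,
        Real.sq_sqrt (hGpos i (k+1)).le]
      have hrb2 : (rb i k)^2 ≤ DX^2 := pow_le_pow_left₀ (hrb_nonneg i k) (hrbD i k) 2
      have hGp := hGpos i (k+1)
      rw [show rb i k ^2 / G i (k+1) * ‖g i k‖^2
          = (rb i k)^2 * (‖g i k‖^2 / G i (k+1)) by ring]
      exact mul_le_mul_of_nonneg_right hrb2 (by positivity)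
    calc a k ≤ Real.sqrt (DX^2 * b k) := Real.sqrt_le_sqrt h4
      _ = DX * Real.sqrt (b k) := by rw [Real.sqrt_mul (sq_nonneg DX), Real.sqrt_sq hDX0]
  -- log telescoping bound
  set L : ℝ := ∑ i, Real.log (G i K / G i 0) with hLdef
  have hbL : ∑ k ∈ range K, b k ≤ L := by
    have hswap : ∑ k ∈ range K, b k = ∑ i, ∑ k ∈ range K, ‖g i k‖^2 / G i (k+1) :=
      Finset.sum_comm
    rw [hswap, hLdef]
    refine Finset.sum_le_sum fun i _ => ?_
    have hterm : ∀ k, ‖g i k‖^2 / G i (k+1) ≤ Real.log (G i (k+1)) - Real.log (G i k) := by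
      intro k
      have h0k := hGpos i k
      have h1k := hGpos i (k+1)
      have hlog := Real.log_le_sub_one_of_pos (show 0 < G i k / G i (k+1) by positivity)
      rw [Real.log_div h0k.ne' h1k.ne'] at hlog
      have heq : G i k / G i (k+1) - 1 = -(‖g i k‖^2 / G i (k+1)) := by
        rw [hGrec]
        field_simp
        ring
      linarith
    calc ∑ k ∈ range K, ‖g i k‖^2 / G i (k+1)
        ≤ ∑ k ∈ range K, (Real.log (G i (k+1)) - Real.log (G i k)) :=
          Finset.sum_le_sum fun k _ => hterm k
      _ = Real.log (G i K) - Real.log (G i 0) :=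
          Finset.sum_range_sub (fun k => Real.log (G i k)) K
      _ = Real.log (G i K / G i 0) :=
          (Real.log_div (hGpos i K).ne' (hG0 i).ne').symm
  -- Cauchy-Schwarz
  have hCS : ∑ k ∈ range K, Real.sqrt (b k)
      ≤ Real.sqrt K * Real.sqrt (∑ k ∈ range K, b k) := by
    have h5 : (∑ k ∈ range K, Real.sqrt (b k))^2 ≤ (K:ℝ) * ∑ k ∈ range K, b k := by
      have h6 := sq_sum_le_card_mul_sum_sq (s := range K) (f := fun k => Real.sqrt (b k))
      simpa [Finset.card_range, Real.sq_sqrt (hb0 _)] using h6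
    calc ∑ k ∈ range K, Real.sqrt (b k)
        = Real.sqrt ((∑ k ∈ range K, Real.sqrt (b k))^2) :=
          (Real.sqrt_sq (Finset.sum_nonneg fun k _ => Real.sqrt_nonneg _)).symm
      _ ≤ Real.sqrt ((K:ℝ) * ∑ k ∈ range K, b k) := Real.sqrt_le_sqrt h5
      _ = Real.sqrt K * Real.sqrt (∑ k ∈ range K, b k) :=
          Real.sqrt_mul (Nat.cast_nonneg K) _
  -- assemble
  have hchain : ∑ k ∈ range K, a k ≤ DX * (Real.sqrt K * Real.sqrt L) := by
    calc ∑ k ∈ range K, a k ≤ ∑ k ∈ range K, DX * Real.sqrt (b k) :=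
          Finset.sum_le_sum fun k _ => hab k
      _ = DX * ∑ k ∈ range K, Real.sqrt (b k) := (Finset.mul_sum _ _ _).symm
      _ ≤ DX * (Real.sqrt K * Real.sqrt (∑ k ∈ range K, b k)) :=
          mul_le_mul_of_nonneg_left hCS hDX0
      _ ≤ DX * (Real.sqrt K * Real.sqrt L) :=
          mul_le_mul_of_nonneg_left
            (mul_le_mul_of_nonneg_left (Real.sqrt_le_sqrt hbL) (Real.sqrt_nonneg _)) hDX0
  have hCtot : ∑ k ∈ range K, C k ≤ (DX * (Real.sqrt K * Real.sqrt L)) / (1-σ) := by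
    rw [le_div_iff₀ h1σ]
    nlinarith [hsumC, hchain]
  have hsq : Real.sqrt (1/(K:ℝ)) = (1/(K:ℝ)) * Real.sqrt K := by
    have hmul : Real.sqrt K * Real.sqrt K = (K:ℝ) := Real.mul_self_sqrt hKpos.le
    have h1 : Real.sqrt K * ((K:ℝ)⁻¹ * Real.sqrt K) = 1 := by
      rw [mul_comm, mul_assoc, hmul]; field_simp
    rw [one_div, Real.sqrt_inv]
    exact (eq_inv_of_mul_eq_one_right h1).symm
  show (1/(K:ℝ)) * ∑ k ∈ range K, C k ≤ (DX / (1 - σ)) * Real.sqrt ((1/(K:ℝ)) * L)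
  calc (1/(K:ℝ)) * ∑ k ∈ range K, C k
      ≤ (1/(K:ℝ)) * ((DX * (Real.sqrt K * Real.sqrt L)) / (1-σ)) :=
        mul_le_mul_of_nonneg_left hCtot (by positivity)
    _ = (DX / (1 - σ)) * Real.sqrt ((1/(K:ℝ)) * L) := by
        rw [Real.sqrt_mul (by positivity : (0:ℝ) ≤ 1/(K:ℝ)) L, hsq]
        ring
end

section
/- Let x_{i,k} ∈ R^d be the D-POEM iterates, W symmetric doubly stochastic, z_{i,k} = Σ_j w_{ij} x_{j,k}, x̄_k = (1/n)Σ_i x_{i,k}, X_k the n×d matrix stacking x_{i,k} as rows, E_k := ‖(I−J)X_k‖_F, and G_k ∈ R^{n×d} the matrix stacking g_{i,k}ᵀ. Then for every t ≥ 1, the disagreement penalty E_t := Σ_{k=0}^{t−1} (r̄_k/n) Σ_{i=1}^n ⟨g_{i,k}, x_{i,k} − z_{i,k}⟩ + Σ_{k=0}^{t−1} (L r̄_k/n) Σ_{i=1}^n ‖x_{i,k} − x̄_k‖ satisfies E_t ≤ (2/n) Σ_{k=0}^{t−1} r̄_k ‖G_k‖_F E_k + (L/√n) Σ_{k=0}^{t−1}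 r̄_k E_k. -/
open Finset

/-- Lemma 5, consensus error: with `z_{i,k} = Σ_j w_{ij} x_{j,k}`,
`x̄_k = (1/n) Σ_i x_{i,k}`, `E_k = ‖(I−J)X_k‖_F = √(Σ_i ‖x_{i,k} − x̄_k‖²)` and
`‖G_k‖_F = √(Σ_i ‖g_{i,k}‖²)`, the disagreement penalty
`E_t = Σ_{k<t} (r̄_k/n) Σ_i ⟨g_{i,k}, x_{i,k} − z_{i,k}⟩ + Σ_{k<t} (L r̄_k/n) Σ_i ‖x_{i,k} − x̄_k‖`
satisfies `E_t ≤ (2/n) Σ_{k<t} r̄_k ‖G_k‖_F E_k + (L/√n) Σ_{k<t} r̄_k E_k`. -/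
theorem stmt_4
    (d n : ℕ) (hn : 0 < n)
    (L : ℝ) (hL : 0 ≤ L)
    (W : Matrix (Fin n) (Fin n) ℝ)
    (hWsymm : W.IsSymm)
    (hWnonneg : ∀ i j, 0 ≤ W i j)
    (hWrow : ∀ i, ∑ j, W i j = 1)
    (hWcol : ∀ j, ∑ i, W i j = 1)
    (x g : Fin n → ℕ → EuclideanSpace ℝ (Fin d))
    (z : Fin n → ℕ → EuclideanSpace ℝ (Fin d))
    (hz : ∀ i k, z i k = ∑ j, W i j • x j k)
    (xbar : ℕ → EuclideanSpace ℝ (Fin d))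
    (hxbar : ∀ k, xbar k = (1 / (n : ℝ)) • ∑ i, x i k)
    (rbar : ℕ → ℝ) (hrbar_nonneg : ∀ k, 0 ≤ rbar k)
    (Efun : ℕ → ℝ) (hEfun : ∀ k, Efun k = Real.sqrt (∑ i, ‖x i k - xbar k‖ ^ 2))
    (Gfrob : ℕ → ℝ) (hGfrob : ∀ k, Gfrob k = Real.sqrt (∑ i, ‖g i k‖ ^ 2))
    (t : ℕ) (ht : 1 ≤ t) :
    (∑ k ∈ range t, (rbar k / n) * ∑ i, (inner ℝ (g i k) (x i k - z i k) : ℝ))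
      + (∑ k ∈ range t, (L * rbar k / n) * ∑ i, ‖x i k - xbar k‖)
      ≤ (2 / n) * ∑ k ∈ range t, rbar k * Gfrob k * Efun k
        + (L / Real.sqrt n) * ∑ k ∈ range t, rbar k * Efun k := by
  have hn' : (0:ℝ) < n := by exact_mod_cast hn
  have hsqrtn : Real.sqrt n * Real.sqrt n = n := Real.mul_self_sqrt (le_of_lt hn')
  have hsqrtn_pos : (0:ℝ) < Real.sqrt n := Real.sqrt_pos.2 hn'
  -- per-step facts
  have hE_nonneg : ∀ k, 0 ≤ Efun k := fun k => (hEfun k).symm ▸ Real.sqrt_nonneg _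
  have hG_nonneg : ∀ k, 0 ≤ Gfrob k := fun k => (hGfrob k).symm ▸ Real.sqrt_nonneg _
  have hzbar : ∀ k, ∀ i : Fin n, z i k - xbar k = ∑ j, W i j • (x j k - xbar k) := by
    intro k i
    rw [hz]
    have : (∑ j, W i j • (x j k - xbar k)) = (∑ j, W i j • x j k) - (∑ j, W i j) • xbar k := by
      rw [Finset.sum_smul]
      rw [← Finset.sum_sub_distrib]
      congr 1; ext j; rw [smul_sub]
    rw [this, hWrow, one_smul]
  -- Jensen: ‖z i − x̄‖² ≤ Σ_j W i j ‖x j − x̄‖²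
  have hjensen : ∀ k, ∀ i : Fin n,
      ‖z i k - xbar k‖ ^ 2 ≤ ∑ j, W i j * ‖x j k - xbar k‖ ^ 2 := by
    intro k i
    have h1 : ‖z i k - xbar k‖ ≤ ∑ j, W i j * ‖x j k - xbar k‖ := by
      rw [hzbar k i]
      refine (norm_sum_le _ _).trans ?_
      apply Finset.sum_le_sum
      intro j _
      rw [norm_smul, Real.norm_eq_abs, abs_of_nonneg (hWnonneg i j)]
    have h2 : (∑ j, W i j * ‖x j k - xbar k‖) ^ 2
        ≤ ∑ j, W i j * ‖x j k - xbar k‖ ^ 2 := by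
      have := sum_mul_sq_le_sq_mul_sq Finset.univ
        (fun j => Real.sqrt (W i j)) (fun j => Real.sqrt (W i j) * ‖x j k - xbar k‖)
      have e1 : ∀ j : Fin n, Real.sqrt (W i j) * (Real.sqrt (W i j) * ‖x j k - xbar k‖)
          = W i j * ‖x j k - xbar k‖ := by
        intro j; rw [← mul_assoc, Real.mul_self_sqrt (hWnonneg i j)]
      have e2 : ∀ j : Fin n, Real.sqrt (W i j) ^ 2 = W i j := fun j =>
        Real.sq_sqrt (hWnonneg i j)
      have e3 : ∀ j : Fin n, (Real.sqrt (W i j) * ‖x j k - xbar k‖) ^ 2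
          = W i j * ‖x j k - xbar k‖ ^ 2 := by
        intro j; rw [mul_pow, e2]
      simp only [e1, e2, e3] at this
      simpa [hWrow i] using this
    calc ‖z i k - xbar k‖ ^ 2 ≤ (∑ j, W i j * ‖x j k - xbar k‖) ^ 2 := by
          apply pow_le_pow_left₀ (norm_nonneg _) h1
      _ ≤ _ := h2
  -- √(Σ ‖z i − x̄‖²) ≤ Efun k
  have hzsum : ∀ k, Real.sqrt (∑ i, ‖z i k - xbar k‖ ^ 2) ≤ Efun k := by
    intro k
    rw [hEfun]
    apply Real.sqrt_le_sqrt
    calc ∑ i, ‖z i k - xbar k‖ ^ 2 ≤ ∑ i, ∑ j, W i j * ‖x j k - xbar k‖ ^ 2 :=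
          Finset.sum_le_sum fun i _ => hjensen k i
      _ = ∑ j, (∑ i, W i j) * ‖x j k - xbar k‖ ^ 2 := by
          rw [Finset.sum_comm]; congr 1; ext j; rw [Finset.sum_mul]
      _ = ∑ j, ‖x j k - xbar k‖ ^ 2 := by simp [hWcol]
  -- A: inner-product bound
  have hA : ∀ k, (∑ i, (inner ℝ (g i k) (x i k - z i k) : ℝ)) ≤ 2 * Gfrob k * Efun k := by
    intro k
    have step1 : (∑ i, (inner ℝ (g i k) (x i k - z i k) : ℝ))
        ≤ ∑ i, ‖g i k‖ * (‖x i k - xbar k‖ + ‖z i k - xbar k‖) := by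
      apply Finset.sum_le_sum
      intro i _
      refine (real_inner_le_norm _ _).trans ?_
      apply mul_le_mul_of_nonneg_left _ (norm_nonneg _)
      calc ‖x i k - z i k‖ = ‖(x i k - xbar k) - (z i k - xbar k)‖ := by abel_nf
        _ ≤ ‖x i k - xbar k‖ + ‖z i k - xbar k‖ := norm_sub_le _ _
    have step2 : (∑ i, ‖g i k‖ * ‖x i k - xbar k‖) ≤ Gfrob k * Efun k := by
      rw [hGfrob, hEfun]
      exact Real.sum_mul_le_sqrt_mul_sqrt _ _ _
    have step3 : (∑ i, ‖g i k‖ * ‖z i k - xbar k‖) ≤ Gfrob k * Efun k := by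
      refine (Real.sum_mul_le_sqrt_mul_sqrt Finset.univ (fun i => ‖g i k‖)
        (fun i => ‖z i k - xbar k‖)).trans ?_
      rw [← hGfrob]
      exact mul_le_mul_of_nonneg_left (hzsum k) (hG_nonneg k)
    calc (∑ i, (inner ℝ (g i k) (x i k - z i k) : ℝ))
        ≤ ∑ i, ‖g i k‖ * (‖x i k - xbar k‖ + ‖z i k - xbar k‖) := step1
      _ = (∑ i, ‖g i k‖ * ‖x i k - xbar k‖) + ∑ i, ‖g i k‖ * ‖z i k - xbar k‖ := by
          rw [← Finset.sum_add_distrib]; congr 1; ext i; ring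
      _ ≤ Gfrob k * Efun k + Gfrob k * Efun k := add_le_add step2 step3
      _ = 2 * Gfrob k * Efun k := by ring
  -- B: ℓ¹-ℓ² bound
  have hB : ∀ k, (∑ i, ‖x i k - xbar k‖) ≤ Real.sqrt n * Efun k := by
    intro k
    have := Real.sum_mul_le_sqrt_mul_sqrt Finset.univ (fun _ : Fin n => (1:ℝ))
      (fun i => ‖x i k - xbar k‖)
    simpa [hEfun] using this
  -- combine
  have h1 : (∑ k ∈ range t, (rbar k / n) * ∑ i, (inner ℝ (g i k) (x i k - z i k) : ℝ))
      ≤ (2 / n) * ∑ k ∈ range t, rbar k * Gfrob k * Efun k := by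
    rw [Finset.mul_sum]
    apply Finset.sum_le_sum
    intro k _
    have h := mul_le_mul_of_nonneg_left (hA k)
      (div_nonneg (hrbar_nonneg k) (le_of_lt hn'))
    calc (rbar k / n) * ∑ i, (inner ℝ (g i k) (x i k - z i k) : ℝ)
        ≤ (rbar k / n) * (2 * Gfrob k * Efun k) := h
      _ = 2 / n * (rbar k * Gfrob k * Efun k) := by ring
  have h2 : (∑ k ∈ range t, (L * rbar k / n) * ∑ i, ‖x i k - xbar k‖)
      ≤ (L / Real.sqrt n) * ∑ k ∈ range t, rbar k * Efun k := by
    rw [Finset.mul_sum]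
    apply Finset.sum_le_sum
    intro k _
    have h := mul_le_mul_of_nonneg_left (hB k)
      (div_nonneg (mul_nonneg hL (hrbar_nonneg k)) (le_of_lt hn'))
    calc (L * rbar k / n) * ∑ i, ‖x i k - xbar k‖
        ≤ (L * rbar k / n) * (Real.sqrt n * Efun k) := h
      _ = L / Real.sqrt n * (rbar k * Efun k) := by
          rw [div_mul_eq_mul_div, div_mul_eq_mul_div,
            div_eq_div_iff hn'.ne' hsqrtn_pos.ne']
          calc L * rbar k * (Real.sqrt n * Efun k) * Real.sqrt n
              = L * (rbar k * Efun k) * (Real.sqrt n * Real.sqrt n) := by ring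
            _ = L * (rbar k * Efun k) * n := by rw [hsqrtn]
  exact add_le_add h1 h2
end

section
/- Let f = (1/n)Σ_{i=1}^n f_i with each f_i convex and L-Lipschitz, x* ∈ X a minimizer of f over X, x_{i,k} ∈ X arbitrary points, x̄_k = (1/n)Σ_i x_{i,k}, z_{i,k} = Σ_j w_{ij} x_{j,k} for a doubly stochastic W, r̄_k > 0 weights, R_t = Σ_{k=0}^{t−1} r̄_k, and x̃_t = (Σ_{k=0}^{t−1} r̄_k x̄_k)/R_t. Suppose each smoothed function f_{i,μ} (ball smoothing with radius μ) is convex, differentiable, and satisfies f_i(x) ≤ f_{i,μ}(x) ≤ f_i(x) + Lμ for all x, and write Δ_{i,k} = ∇f_{i,μ_{i,k}}(x_{i,k}) − g_{i,k}. Then for every t ≥ 1: R_t (f(x̃_t) − f(x*)) ≤ W_t + N_t + B_t + E_t, where W_t = Σ_k (r̄_k/n) Σ_i ⟨g_{i,k}, z_{i,k} − x*⟩, N_t = Σ_k r̄_k (1/n) Σ_i ⟨Δ_{i,k}, x_{i,k} − x*⟩, B_t = Σ_k (2L r̄_k/n) Σ_i μ_{i,k}, and E_t = Σ_k (r̄_k/n)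 Σ_i ⟨g_{i,k}, x_{i,k} − z_{i,k}⟩ + Σ_k (L r̄_k/n) Σ_i ‖x_{i,k} − x̄_k‖ (all sums over k = 0,…,t−1). -/
open Finset

lemma grad_convex_ineq {d : ℕ} {φ : EuclideanSpace ℝ (Fin d) → ℝ}
    (hconv : ConvexOn ℝ Set.univ φ) (hdiff : Differentiable ℝ φ)
    (a b : EuclideanSpace ℝ (Fin d)) :
    φ a + (inner ℝ (gradient φ a) (b - a) : ℝ) ≤ φ b := by
  set v := b - a with hv
  have hF : HasFDerivAt φ ((InnerProductSpace.toDual ℝ _) (gradient φ a)) a :=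
    hasGradientAt_iff_hasFDerivAt.mp (hdiff a).hasGradientAt
  have hline : HasDerivAt (fun s : ℝ => a + s • v) v 0 := by
    simpa using ((hasDerivAt_id (0:ℝ)).smul_const v).const_add a
  have hF' : HasFDerivAt φ ((InnerProductSpace.toDual ℝ _) (gradient φ a)) (a + (0:ℝ) • v) := by
    simpa using hF
  have hψ : HasDerivAt (fun s : ℝ => φ (a + s • v)) (inner ℝ (gradient φ a) v : ℝ) 0 := by
    have h := hF'.comp_hasDerivAt 0 hline; rw [InnerProductSpace.toDual_apply_apply] at h; exact h
  have hψconv : ConvexOn ℝ Set.univ (fun s : ℝ => φ (a + s • v)) := by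
    have h := hconv.comp_affineMap (AffineMap.lineMap a b)
    have heq : (fun s : ℝ => φ (a + s • v)) = φ ∘ (AffineMap.lineMap a b : ℝ →ᵃ[ℝ] _) := by
      funext s
      simp [AffineMap.lineMap_apply, hv, add_comm]
    rw [heq]
    simpa using h
  have hslope := hψconv.le_slope_of_hasDerivAt (Set.mem_univ (0:ℝ)) (Set.mem_univ 1)
    zero_lt_one hψ
  rw [slope_def_field] at hslope
  simp only [one_smul, zero_smul, add_zero, sub_zero, div_one] at hslope
  have h1 : a + v = b := by rw [hv]; abel
  rw [h1] at hslope
  linarith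


/-- Lemma 6, basic decomposition. With `f = (1/n)Σ_i f_i`, each `f_i` convex and
`L`-Lipschitz, `x* ∈ X` a minimizer of `f` over `X`, arbitrary points `x_{i,k} ∈ X`,
`x̄_k = (1/n)Σ_i x_{i,k}`, `z_{i,k} = Σ_j w_{ij}x_{j,k}` (`W` doubly stochastic), positive
weights `r̄_k`, `R_t = Σ_{k<t} r̄_k`, `x̃_t = (Σ_{k<t} r̄_k x̄_k)/R_t`, smoothed functions
`f_{i,μ}` that are convex, differentiable, and satisfy `f_i ≤ f_{i,μ} ≤ f_i + Lμ`, and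
`Δ_{i,k} = ∇f_{i,μ_{i,k}}(x_{i,k}) − g_{i,k}`, one has
`R_t (f(x̃_t) − f(x*)) ≤ W_t + N_t + B_t + E_t`. -/
theorem stmt_9
    (d n : ℕ) (hn : 0 < n)
    (L : ℝ) (hL : 0 < L)
    (X : Set (EuclideanSpace ℝ (Fin d))) (hXconv : Convex ℝ X)
    (f : Fin n → EuclideanSpace ℝ (Fin d) → ℝ)
    (hfconv : ∀ i, ConvexOn ℝ Set.univ (f i))
    (hfLip : ∀ i a b, |f i a - f i b| ≤ L * ‖a - b‖)
    (favg : EuclideanSpace ℝ (Fin d) → ℝ)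
    (hfavg : ∀ y, favg y = (1 / n) * ∑ i, f i y)
    (xstar : EuclideanSpace ℝ (Fin d)) (hxstarX : xstar ∈ X)
    (hxstar_min : ∀ y ∈ X, favg xstar ≤ favg y)
    (W : Matrix (Fin n) (Fin n) ℝ)
    (hWnonneg : ∀ i j, 0 ≤ W i j)
    (hWrow : ∀ i, ∑ j, W i j = 1)
    (hWcol : ∀ j, ∑ i, W i j = 1)
    (x g : Fin n → ℕ → EuclideanSpace ℝ (Fin d))
    (hxX : ∀ i k, x i k ∈ X)
    (z : Fin n → ℕ → EuclideanSpace ℝ (Fin d))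
    (hz : ∀ i k, z i k = ∑ j, W i j • x j k)
    (xbar : ℕ → EuclideanSpace ℝ (Fin d))
    (hxbar : ∀ k, xbar k = (1 / (n : ℝ)) • ∑ i, x i k)
    (rbar : ℕ → ℝ) (hrbar_pos : ∀ k, 0 < rbar k)
    (R : ℕ → ℝ) (hR : ∀ t, R t = ∑ k ∈ range t, rbar k)
    (xtilde : ℕ → EuclideanSpace ℝ (Fin d))
    (hxtilde : ∀ t, xtilde t = (R t)⁻¹ • ∑ k ∈ range t, rbar k • xbar k)
    (μ : Fin n → ℕ → ℝ) (hμpos : ∀ i k, 0 < μ i k)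
    (fsm : Fin n → ℝ → EuclideanSpace ℝ (Fin d) → ℝ)
    (hfsm_conv : ∀ i ν, 0 < ν → ConvexOn ℝ Set.univ (fsm i ν))
    (hfsm_diff : ∀ i ν, 0 < ν → Differentiable ℝ (fsm i ν))
    (hfsm_le : ∀ i ν, 0 < ν → ∀ y, f i y ≤ fsm i ν y)
    (hfsm_ge : ∀ i ν, 0 < ν → ∀ y, fsm i ν y ≤ f i y + L * ν)
    (Δ : Fin n → ℕ → EuclideanSpace ℝ (Fin d))
    (hΔ : ∀ i k, Δ i k = gradient (fsm i (μ i k)) (x i k) - g i k)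
    (t : ℕ) (ht : 1 ≤ t) :
    R t * (favg (xtilde t) - favg xstar)
      ≤ (∑ k ∈ range t, (rbar k / n) * ∑ i, (inner ℝ (g i k) (z i k - xstar) : ℝ))
        + (∑ k ∈ range t, rbar k * ((1 / n) * ∑ i, (inner ℝ (Δ i k) (x i k - xstar) : ℝ)))
        + (∑ k ∈ range t, (2 * L * rbar k / n) * ∑ i, μ i k)
        + ((∑ k ∈ range t, (rbar k / n) * ∑ i, (inner ℝ (g i k) (x i k - z i k) : ℝ))
            + (∑ k ∈ range t, (L * rbar k / n) * ∑ i, ‖x i k - xbar k‖)) := by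

  classical
  have hn' : (0:ℝ) < n := by exact_mod_cast hn
  -- convexity of favg
  have hsumconv : ∀ s : Finset (Fin n), ConvexOn ℝ Set.univ (fun y => ∑ i ∈ s, f i y) := by
    intro s
    induction s using Finset.induction with
    | empty => simpa using convexOn_const (0:ℝ) convex_univ
    | insert _ _ h ih =>
        simp only [Finset.sum_insert h]
        exact (hfconv _).add ih
  have hfavgconv : ConvexOn ℝ Set.univ favg := by
    have hfeq : favg = fun y => (1/(n:ℝ)) • (fun y => ∑ i, f i y) y := by
      funext y; rw [hfavg y]; simp [smul_eq_mul]
    rw [hfeq]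
    exact (hsumconv Finset.univ).smul (by positivity)
  have hRpos : 0 < R t := by
    rw [hR]
    exact Finset.sum_pos (fun k _ => hrbar_pos k) (nonempty_range_iff.mpr (by omega))
  -- Jensen step
  have hJ : favg (xtilde t) ≤ (R t)⁻¹ * ∑ k ∈ range t, rbar k * favg (xbar k) := by
    have hcm := hfavgconv.map_centerMass_le (t := range t) (w := rbar) (p := xbar)
      (fun k _ => (hrbar_pos k).le) (by rw [← hR]; exact hRpos) (fun k _ => Set.mem_univ _)
    rw [Finset.centerMass, Finset.centerMass] at hcm
    rw [hxtilde t, hR t]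
    simpa [smul_eq_mul, Finset.mul_sum] using hcm
  have step1 : R t * (favg (xtilde t) - favg xstar)
      ≤ ∑ k ∈ range t, rbar k * (favg (xbar k) - favg xstar) := by
    have h1 : R t * (favg (xtilde t) - favg xstar)
        ≤ R t * ((R t)⁻¹ * (∑ k ∈ range t, rbar k * favg (xbar k)) - favg xstar) := by
      apply mul_le_mul_of_nonneg_left (by linarith) hRpos.le
    have h2 : R t * ((R t)⁻¹ * (∑ k ∈ range t, rbar k * favg (xbar k)) - favg xstar)
        = (∑ k ∈ range t, rbar k * favg (xbar k)) - R t * favg xstar := by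
      field_simp
    have h3 : (∑ k ∈ range t, rbar k * favg (xbar k)) - R t * favg xstar
        = ∑ k ∈ range t, rbar k * (favg (xbar k) - favg xstar) := by
      rw [hR, Finset.sum_mul, ← Finset.sum_sub_distrib]
      simp [mul_sub]
    linarith
  -- per (i,k) inequality
  have key : ∀ k, ∀ i : Fin n,
      f i (xbar k) - f i xstar ≤
        (inner ℝ (g i k) (z i k - xstar) : ℝ) + (inner ℝ (Δ i k) (x i k - xstar) : ℝ)
          + 2 * L * μ i k + (inner ℝ (g i k) (x i k - z i k) : ℝ)
          + L * ‖x i k - xbar k‖ := by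
    intro k i
    have hμ := hμpos i k
    have h1 : f i (xbar k) - f i (x i k) ≤ L * ‖x i k - xbar k‖ := by
      have h := hfLip i (xbar k) (x i k)
      rw [norm_sub_rev] at h
      exact (le_abs_self _).trans h
    have h2 := hfsm_le i (μ i k) hμ (x i k)
    have h3 := hfsm_ge i (μ i k) hμ xstar
    have h4 : fsm i (μ i k) (x i k) - fsm i (μ i k) xstar
        ≤ (inner ℝ (gradient (fsm i (μ i k)) (x i k)) (x i k - xstar) : ℝ) := by
      have h := grad_convex_ineq (hfsm_conv i _ hμ) (hfsm_diff i _ hμ) (x i k) xstar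
      have hswap : (inner ℝ (gradient (fsm i (μ i k)) (x i k)) (xstar - x i k) : ℝ)
          = - (inner ℝ (gradient (fsm i (μ i k)) (x i k)) (x i k - xstar) : ℝ) := by
        rw [← neg_sub (x i k) xstar, inner_neg_right]
      rw [hswap] at h
      linarith
    have hG : gradient (fsm i (μ i k)) (x i k) = Δ i k + g i k := by
      rw [hΔ i k]; abel
    have h5 : (inner ℝ (gradient (fsm i (μ i k)) (x i k)) (x i k - xstar) : ℝ)
        = (inner ℝ (Δ i k) (x i k - xstar) : ℝ)
          + ((inner ℝ (g i k) (z i k - xstar) : ℝ) + (inner ℝ (g i k) (x i k - z i k) : ℝ)) := by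
      rw [hG, inner_add_left, ← inner_add_right]
      congr 1
      rw [show (z i k - xstar) + (x i k - z i k) = x i k - xstar by abel]
    rw [h5] at h4
    have hLμ : 0 ≤ L * μ i k := by positivity
    linarith
  -- per k inequality
  have keyk : ∀ k, rbar k * (favg (xbar k) - favg xstar)
      ≤ (rbar k / n) * ∑ i, ((inner ℝ (g i k) (z i k - xstar) : ℝ)
          + (inner ℝ (Δ i k) (x i k - xstar) : ℝ) + 2 * L * μ i k
          + (inner ℝ (g i k) (x i k - z i k) : ℝ) + L * ‖x i k - xbar k‖) := by
    intro k
    have hsum : ∑ i, (f i (xbar k) - f i xstar)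
        ≤ ∑ i, ((inner ℝ (g i k) (z i k - xstar) : ℝ)
          + (inner ℝ (Δ i k) (x i k - xstar) : ℝ) + 2 * L * μ i k
          + (inner ℝ (g i k) (x i k - z i k) : ℝ) + L * ‖x i k - xbar k‖) :=
      Finset.sum_le_sum (fun i _ => key k i)
    have hfd : favg (xbar k) - favg xstar = (1/(n:ℝ)) * ∑ i, (f i (xbar k) - f i xstar) := by
      rw [hfavg, hfavg, Finset.sum_sub_distrib]; ring
    rw [hfd]
    calc rbar k * ((1/(n:ℝ)) * ∑ i, (f i (xbar k) - f i xstar))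
        ≤ rbar k * ((1/(n:ℝ)) * ∑ i, ((inner ℝ (g i k) (z i k - xstar) : ℝ)
          + (inner ℝ (Δ i k) (x i k - xstar) : ℝ) + 2 * L * μ i k
          + (inner ℝ (g i k) (x i k - z i k) : ℝ) + L * ‖x i k - xbar k‖)) := by
          apply mul_le_mul_of_nonneg_left _ (hrbar_pos k).le
          apply mul_le_mul_of_nonneg_left hsum (by positivity)
      _ = (rbar k / n) * ∑ i, ((inner ℝ (g i k) (z i k - xstar) : ℝ)
          + (inner ℝ (Δ i k) (x i k - xstar) : ℝ) + 2 * L * μ i k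
          + (inner ℝ (g i k) (x i k - z i k) : ℝ) + L * ‖x i k - xbar k‖) := by ring
  calc R t * (favg (xtilde t) - favg xstar)
      ≤ ∑ k ∈ range t, rbar k * (favg (xbar k) - favg xstar) := step1
    _ ≤ ∑ k ∈ range t, (rbar k / n) * ∑ i, ((inner ℝ (g i k) (z i k - xstar) : ℝ)
          + (inner ℝ (Δ i k) (x i k - xstar) : ℝ) + 2 * L * μ i k
          + (inner ℝ (g i k) (x i k - z i k) : ℝ) + L * ‖x i k - xbar k‖) :=
        Finset.sum_le_sum (fun k _ => keyk k)
    _ = _ := by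
        simp only [← Finset.sum_add_distrib]
        refine Finset.sum_congr rfl fun k _ => ?_
        simp only [Finset.sum_add_distrib]
        have hμs : ∑ i : Fin n, 2 * L * μ i k = 2 * L * ∑ i, μ i k := by
          rw [Finset.mul_sum]
        have hns : ∑ i : Fin n, L * ‖x i k - xbar k‖ = L * ∑ i, ‖x i k - xbar k‖ := by
          rw [Finset.mul_sum]
        rw [hμs, hns]
        ring
end
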